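/- Let G be a finite connected simple graph with minimum cycle length greater than 6 (no cycle of length at most 6) and with at least 3 vertices of degree at least 2. Let H be the hybrid graph of G: distinct vertices are adjacent in H iff they are adjacent in G or have a common neighbor in G. Let i be a vertex of degree at least 2 in G and j a vertex of degree exactly 1 in G, and suppose i and j are adjacent in H. Then i and j are adjacent in G if and only if the set {k : k ≠ j, k adjacent to i in G, deg_G(k) ≥ 2} equals the set {k : k ≠ i, k adjacent to j in H, deg_G(k) ≥ 2}. -/

import Mathlib

/-- The hybrid graph of `G`: distinct vertices are adjacent iff they are adjacent in `G`
or have a common neighbor in `G`. -/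
def hybrid {V : Type*} (G : SimpleGraph V) : SimpleGraph V where
  Adj i j := i ≠ j ∧ (G.Adj i j ∨ ∃ k, G.Adj i k ∧ G.Adj k j)
  symm := by
    constructor
    rintro i j ⟨hne, h | ⟨k, h1, h2⟩⟩
    · exact ⟨hne.symm, Or.inl h.symm⟩
    · exact ⟨hne.symm, Or.inr ⟨k, h2.symm, h1.symm⟩⟩
  loopless := by
    constructor
    rintro i ⟨hne, -⟩
    exact hne rfl

lemma no_triangle {V : Type*} {G : SimpleGraph V} (hg : 6 < G.girth)
    {a b c : V} (hab : G.Adj a b) (hbc : G.Adj b c) (hca : G.Adj c a) : False := by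
  have hw : (SimpleGraph.Walk.cons hab (SimpleGraph.Walk.cons hbc
      (SimpleGraph.Walk.cons hca SimpleGraph.Walk.nil))).IsCycle := by
    simp [SimpleGraph.Walk.isCycle_def, SimpleGraph.Walk.isTrail_def, hab.ne, hbc.ne, hca.ne,
      hab.ne', hbc.ne', hca.ne']
  have h1 : G.egirth ≤ 3 := by
    calc G.egirth ≤ _ := iInf_le _ a
    _ ≤ _ := iInf_le _ _
    _ ≤ _ := iInf_le _ hw
    _ = 3 := by simp
  have : G.girth ≤ 3 := by
    have := ENat.toNat_le_toNat h1 (by simp)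
    simpa [SimpleGraph.girth] using this
  omega

lemma walk_ind {V : Type*} {G : SimpleGraph V} (P : V → Prop)
    (h : ∀ a b, P a → G.Adj a b → P b) : ∀ {u v : V} (_ : G.Walk u v), P u → P v := by
  intro u v w
  induction w with
  | nil => exact id
  | cons h' _ ih => exact fun hu => ih (h _ _ hu h')

lemma two_le_degree {V : Type*} [Fintype V] [DecidableEq V] {G : SimpleGraph V}
    [DecidableRel G.Adj] {k a b : V} (hab : a ≠ b) (ha : G.Adj k a) (hb : G.Adj k b) :
    2 ≤ G.degree k := by
  have : ({a, b} : Finset V) ⊆ G.neighborFinset k := by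
    intro x hx
    rw [SimpleGraph.mem_neighborFinset]
    rcases Finset.mem_insert.mp hx with h | h
    · exact h ▸ ha
    · exact (Finset.mem_singleton.mp h) ▸ hb
  calc 2 = ({a, b} : Finset V).card := (Finset.card_pair hab).symm
    _ ≤ _ := Finset.card_le_card this
    _ = G.degree k := rfl

/-- Theorem 3 of the paper: identifying the true parent of a leaf node.
`G` is connected, has girth greater than 6 and at least 3 non-leaf nodes; `i` is a non-leaf
node, `j` a leaf node, and `(i,j)` an edge of the hybrid graph. Then `(i,j)` is a true edge
of `G` iff the non-leaf neighbors of `i` in `G` coincide with the non-leaf neighbors of `j`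
in the hybrid graph. -/
theorem stmt4 {V : Type*} [Fintype V] [DecidableEq V] (G : SimpleGraph V)
    [DecidableRel G.Adj]
    (hconn : G.Connected) (hgirth : 6 < G.girth)
    (h3 : 3 ≤ (Finset.univ.filter fun v => 2 ≤ G.degree v).card)
    (i j : V) (hi : 2 ≤ G.degree i) (hj : G.degree j = 1)
    (hij : (hybrid G).Adj i j) :
    G.Adj i j ↔
      {k : V | k ≠ j ∧ G.Adj i k ∧ 2 ≤ G.degree k} =
        {k : V | k ≠ i ∧ (hybrid G).Adj j k ∧ 2 ≤ G.degree k} := by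
  -- the unique neighbor of j
  obtain ⟨p, hp⟩ : ∃ p, G.neighborFinset j = {p} :=
    Finset.card_eq_one.mp (hj ▸ rfl)
  have hjp : G.Adj j p := by
    rw [← SimpleGraph.mem_neighborFinset, hp]; exact Finset.mem_singleton_self p
  have huniq : ∀ k, G.Adj j k → k = p := by
    intro k hk
    have := (SimpleGraph.mem_neighborFinset G j k).mpr hk
    rw [hp] at this; exact Finset.mem_singleton.mp this
  have hji : j ≠ i := hij.ne'
  constructor
  · -- forward direction
    intro hadj
    have hip : i = p := huniq i hadj.symm
    ext k
    simp only [Set.mem_setOf_eq]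
    constructor
    · rintro ⟨hkj, hik, hdk⟩
      exact ⟨hik.ne', ⟨Ne.symm hkj, Or.inr ⟨i, hadj.symm, hik⟩⟩, hdk⟩
    · rintro ⟨hki, ⟨hjk, hh⟩, hdk⟩
      rcases hh with h | ⟨m, hjm, hmk⟩
      · exact absurd (huniq k h ▸ hip.symm : k = i) hki
      · have : m = p := huniq m hjm
        subst this
        exact ⟨Ne.symm hjk, hip ▸ hmk, hdk⟩
  · -- backward direction
    intro hset
    by_contra hnadj
    -- from hybrid adjacency, i is adjacent to p
    have hip : G.Adj i p := by
      rcases hij.2 with h | ⟨k, h1, h2⟩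
      · exact absurd h hnadj
      · exact (huniq k h2.symm) ▸ h1
    have hpi : p ≠ i := hip.ne'
    have hpj : p ≠ j := hjp.ne'
    have hdp : 2 ≤ G.degree p := two_le_degree hji hjp.symm hip.symm
    have hdeg_ne_j : ∀ k : V, 2 ≤ G.degree k → k ≠ j := fun k hk h => by
      rw [h] at hk; omega
    -- Step A: every non-leaf neighbor of i is p
    have stepA : ∀ k, G.Adj i k → 2 ≤ G.degree k → k = p := by
      intro k hik hdk
      have hkL : k ∈ {k : V | k ≠ j ∧ G.Adj i k ∧ 2 ≤ G.degree k} :=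
        ⟨hdeg_ne_j k hdk, hik, hdk⟩
      rw [hset] at hkL
      obtain ⟨hki, ⟨hjk, hh⟩, -⟩ := hkL
      rcases hh with h | ⟨m, hjm, hmk⟩
      · exact huniq k h
      · have hm : m = p := huniq m hjm
        subst hm
        by_contra hkp
        exact no_triangle hgirth hik hmk.symm hip.symm
    -- Step B: every non-leaf neighbor of p is i
    have stepB : ∀ k, G.Adj p k → 2 ≤ G.degree k → k = i := by
      intro k hpk hdk
      by_contra hki
      have hkR : k ∈ {k : V | k ≠ i ∧ (hybrid G).Adj j k ∧ 2 ≤ G.degree k} :=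
        ⟨hki, ⟨Ne.symm (hdeg_ne_j k hdk), Or.inr ⟨p, hjp, hpk⟩⟩, hdk⟩
      rw [← hset] at hkR
      obtain ⟨-, hik, -⟩ := hkR
      exact no_triangle hgirth hik hpk.symm hip.symm
    -- invariant
    set P : V → Prop := fun v => v = i ∨ v = p ∨ (G.degree v ≤ 1 ∧ ∀ u, G.Adj v u → u = i ∨ u = p)
      with hP
    have leaf_nb : ∀ b c : V, G.degree b ≤ 1 → G.Adj b c → ∀ u, G.Adj b u → u = c := by
      intro b c hdb hbc u hbu
      have h1 : c ∈ G.neighborFinset b := (SimpleGraph.mem_neighborFinset G b c).mpr hbc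
      have h2 : u ∈ G.neighborFinset b := (SimpleGraph.mem_neighborFinset G b u).mpr hbu
      exact Finset.card_le_one.mp hdb u h2 c h1
    have hclosed : ∀ a b, P a → G.Adj a b → P b := by
      rintro a b (rfl | rfl | ⟨hda, hna⟩) hab
      · by_cases hdb : 2 ≤ G.degree b
        · exact Or.inr (Or.inl (stepA b hab hdb))
        · exact Or.inr (Or.inr ⟨by omega, fun u hu =>
            Or.inl (leaf_nb b a (by omega) hab.symm u hu)⟩)
      · by_cases hdb : 2 ≤ G.degree b
        · exact Or.inl (stepB b hab hdb)
        · exact Or.inr (Or.inr ⟨by omega, fun u hu =>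
            Or.inr (leaf_nb b a (by omega) hab.symm u hu)⟩)
      · exact (hna b hab).imp id Or.inl
    -- there is a third non-leaf vertex
    obtain ⟨w, hw, hwip⟩ : ∃ w ∈ Finset.univ.filter fun v => 2 ≤ G.degree v, w ∉ ({i, p} : Finset V) := by
      by_contra h
      push_neg at h
      have hsub : (Finset.univ.filter fun v => 2 ≤ G.degree v) ⊆ {i, p} := h
      have := Finset.card_le_card hsub
      have h2 : ({i, p} : Finset V).card ≤ 2 := Finset.card_insert_le _ _ |>.trans (by simp)
      omega
    have hdw : 2 ≤ G.degree w := (Finset.mem_filter.mp hw).2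
    have hwi : w ≠ i := fun h => hwip (by simp [h])
    have hwp : w ≠ p := fun h => hwip (by simp [h])
    obtain ⟨walk⟩ := hconn.preconnected i w
    rcases walk_ind P hclosed walk (Or.inl rfl) with h | h | ⟨h, -⟩
    · exact hwi h
    · exact hwp h
    · omega
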